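/- Let k be even and G = G_0(u) ⋄ H(u) be a connected k-uniform hypergraph which is the coalescence of G_0 and H at u. If x is a first eigenvector of G with x_u = 0, then Σ_{e ∈ E_{G_0}(u)} Π_{v ∈ e\{u}} x_v = 0 and Σ_{e ∈ E_H(u)} Π_{v ∈ e\{u}} x_v = 0. -/
import Mathlib


open Finset BigOperators

variable {V : Type*}

/-- A `k`-uniform hypergraph given by its edge set: every edge has exactly `k` vertices. -/
def Uniform [DecidableEq V] (E : Finset (Finset V)) (k : ℕ) : Prop :=
  ∀ e ∈ E, e.card = k

/-- Two vertices are adjacent if some edge contains both. -/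
def HAdj [DecidableEq V] (E : Finset (Finset V)) (a b : V) : Prop :=
  a ≠ b ∧ ∃ e ∈ E, a ∈ e ∧ b ∈ e

/-- The hypergraph is connected: every two vertices are joined by a walk. -/
def HConnected [DecidableEq V] (E : Finset (Finset V)) : Prop :=
  ∀ a b : V, Relation.ReflTransGen (HAdj E) a b

/-- `(lam, x)` satisfies the H-eigen equations of the adjacency tensor:
for each vertex `v`, `∑_{e ∋ v} ∏_{w ∈ e \ {v}} x w = lam * (x v)^(k-1)`. -/
def isEig [Fintype V] [DecidableEq V] (E : Finset (Finset V)) (k : ℕ) (lam : ℝ) (x : V → ℝ) :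
    Prop :=
  ∀ v : V, (∑ e ∈ E.filter (fun e => v ∈ e), ∏ w ∈ e.erase v, x w) = lam * x v ^ (k - 1)

/-- The set of H-eigenvalues of the adjacency tensor of the hypergraph. -/
def specH [Fintype V] [DecidableEq V] (E : Finset (Finset V)) (k : ℕ) : Set ℝ :=
  {lam | ∃ x : V → ℝ, x ≠ 0 ∧ isEig E k lam x}

/-- The least H-eigenvalue of the adjacency tensor. -/
noncomputable def lamMin [Fintype V] [DecidableEq V] (E : Finset (Finset V)) (k : ℕ) : ℝ :=
  sInf (specH E k)

/-- A first eigenvector: a real eigenvector associated with the least H-eigenvalue. -/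
def IsFirstEigvec [Fintype V] [DecidableEq V] (E : Finset (Finset V)) (k : ℕ) (x : V → ℝ) :
    Prop :=
  x ≠ 0 ∧ isEig E k (lamMin E k) x

/-- If `x` is a first eigenvector of the coalescence `G = G₀(u) ⋄ H(u)` with `x u = 0`, then the sums `∑_{e ∈ E_{G₀}(u)} ∏_{v ∈ e∖{u}} x v` and `∑_{e ∈ E_H(u)} ∏_{v ∈ e∖{u}} x v` both vanish. -/


lemma eig_ray [Fintype V] [DecidableEq V] (E : Finset (Finset V)) (k : ℕ) (hk0 : 0 < k)
    (hU : ∀ e ∈ E, e.card = k) (μ : ℝ) (z : V → ℝ)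
    (h : ∀ v : V, (∑ e ∈ E.filter (fun e => v ∈ e), ∏ w ∈ e.erase v, z w) = μ * z v ^ (k - 1)) :
    μ * (∑ v, z v ^ k) = k * ∑ e ∈ E, ∏ w ∈ e, z w := by
  have key : ∀ v : V, z v * (μ * z v ^ (k-1)) = μ * z v ^ k := by
    intro v
    rw [← mul_assoc, mul_comm (z v) μ, mul_assoc]
    congr 1
    rw [← pow_succ']
    congr 1
    omega
  calc μ * (∑ v, z v ^ k) = ∑ v, z v * (μ * z v ^ (k-1)) := by
        rw [Finset.mul_sum]; exact (Finset.sum_congr rfl fun v _ => (key v)).symm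
    _ = ∑ v : V, ∑ e ∈ E.filter (fun e => v ∈ e), z v * ∏ w ∈ e.erase v, z w := by
        refine Finset.sum_congr rfl fun v _ => ?_
        rw [← h v, Finset.mul_sum]
    _ = ∑ e ∈ E, ∑ v ∈ univ.filter (· ∈ e), z v * ∏ w ∈ e.erase v, z w := by
        apply Finset.sum_comm'
        intro v e
        simp [Finset.mem_filter, and_comm]
    _ = ∑ e ∈ E, (k : ℝ) * ∏ w ∈ e, z w := by
        refine Finset.sum_congr rfl fun e he => ?_
        have hfe : univ.filter (· ∈ e) = e := by
          ext w; simp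
        rw [hfe]
        have : ∀ v ∈ e, z v * ∏ w ∈ e.erase v, z w = ∏ w ∈ e, z w := fun v hv =>
          Finset.mul_prod_erase e z hv
        rw [Finset.sum_congr rfl this, Finset.sum_const, hU e he, nsmul_eq_mul]
    _ = k * ∑ e ∈ E, ∏ w ∈ e, z w := by rw [Finset.mul_sum]


lemma spec_bdd [Fintype V] [DecidableEq V] (E : Finset (Finset V)) (k : ℕ) (hk0 : 0 < k)
    (hU : ∀ e ∈ E, e.card = k) (μ : ℝ) (z : V → ℝ) (hz : z ≠ 0)
    (h : ∀ v : V, (∑ e ∈ E.filter (fun e => v ∈ e), ∏ w ∈ e.erase v, z w) = μ * z v ^ (k - 1)) :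
    -(E.card : ℝ) ≤ μ := by
  have hne : (univ : Finset V).Nonempty := by
    obtain ⟨w, hw⟩ := Function.ne_iff.mp hz
    exact ⟨w, mem_univ w⟩
  obtain ⟨v, -, hv⟩ := Finset.exists_max_image univ (fun w => |z w|) hne
  set M := |z v| with hM
  have hMpos : 0 < M := by
    obtain ⟨w, hw⟩ := Function.ne_iff.mp hz
    have := hv w (mem_univ w)
    have : 0 < |z w| := abs_pos.mpr hw
    linarith [hv w (mem_univ w)]
  have hMk : (0:ℝ) < M ^ (k-1) := pow_pos hMpos _
  have hb : |μ| * M ^ (k-1) ≤ (E.card : ℝ) * M ^ (k-1) := by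
    have h1 : |μ * z v ^ (k-1)| = |μ| * M ^ (k-1) := by
      rw [abs_mul, abs_pow]
    have h2 : |∑ e ∈ E.filter (fun e => v ∈ e), ∏ w ∈ e.erase v, z w|
        ≤ (E.card : ℝ) * M ^ (k-1) := by
      calc |∑ e ∈ E.filter (fun e => v ∈ e), ∏ w ∈ e.erase v, z w|
          ≤ ∑ e ∈ E.filter (fun e => v ∈ e), |∏ w ∈ e.erase v, z w| :=
            Finset.abs_sum_le_sum_abs _ _
        _ ≤ ∑ e ∈ E.filter (fun e => v ∈ e), M ^ (k-1) := by
            refine Finset.sum_le_sum fun e he => ?_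
            rw [Finset.mem_filter] at he
            rw [abs_prod]
            have : ∏ w ∈ e.erase v, |z w| ≤ ∏ w ∈ e.erase v, M :=
              Finset.prod_le_prod (fun w _ => abs_nonneg _) (fun w _ => hv w (mem_univ w))
            rwa [Finset.prod_const, Finset.card_erase_of_mem he.2, hU e he.1] at this
        _ ≤ (E.card : ℝ) * M ^ (k-1) := by
            rw [Finset.sum_const, nsmul_eq_mul]
            have hc : ((E.filter (fun e => v ∈ e)).card : ℝ) ≤ (E.card : ℝ) := by
              exact_mod_cast Finset.card_filter_le _ _
            exact mul_le_mul_of_nonneg_right hc (le_of_lt hMk)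
    rw [← h1]; rw [← h v]; exact h2
  have : |μ| ≤ (E.card : ℝ) := le_of_mul_le_mul_right hb hMk
  linarith [neg_abs_le μ]


lemma lagrange [Fintype V] [DecidableEq V] (E : Finset (Finset V)) (k : ℕ) (hk0 : 0 < k)
    (hke : Even k) (hU : ∀ e ∈ E, e.card = k) (μ : ℝ) (z : V → ℝ)
    (heq : μ * (∑ v, z v ^ k) = k * ∑ e ∈ E, ∏ w ∈ e, z w)
    (hmin : ∀ w : V → ℝ, 0 < (∑ v, w v ^ k) →
      μ * (∑ v, w v ^ k) ≤ k * ∑ e ∈ E, ∏ a ∈ e, w a) :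
    ∀ v : V, (∑ e ∈ E.filter (fun e => v ∈ e), ∏ w ∈ e.erase v, z w) = μ * z v ^ (k - 1) := by
  intro v
  set B : ℝ := ∑ e ∈ E.filter (fun e => v ∈ e), ∏ w ∈ e.erase v, z w with hB
  set A : ℝ := ∑ e ∈ E.filter (fun e => ¬ v ∈ e), ∏ w ∈ e, z w with hA
  set C : ℝ := ∑ w ∈ univ \ {v}, z w ^ k with hC
  have hCnn : 0 ≤ C := Finset.sum_nonneg fun w _ => hke.pow_nonneg _
  -- N and f of the updated vector
  have hN : ∀ t : ℝ, (∑ w, Function.update z v t w ^ k) = C + t ^ k := by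
    intro t
    have h1 : ∑ w : V, Function.update z v t w ^ k
        = ∑ w : V, Function.update (fun w => z w ^ k) v (t ^ k) w := by
      refine Finset.sum_congr rfl fun w _ => ?_
      by_cases hw : w = v
      · subst hw; simp [Function.update_self]
      · simp [Function.update_of_ne hw]
    rw [h1, Finset.sum_update_of_mem (mem_univ v) (fun w => z w ^ k) (t ^ k), hC]
    ring
  have hf : ∀ t : ℝ, (∑ e ∈ E, ∏ w ∈ e, Function.update z v t w) = A + B * t := by
    intro t
    rw [← Finset.sum_filter_add_sum_filter_not E (fun e => v ∈ e)]
    have h1 : ∑ e ∈ E.filter (fun e => v ∈ e), ∏ w ∈ e, Function.update z v t w = B * t := by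
      rw [hB, Finset.sum_mul]
      refine Finset.sum_congr rfl fun e he => ?_
      rw [Finset.mem_filter] at he
      rw [← Finset.mul_prod_erase e _ he.2, Function.update_self]
      rw [mul_comm]
      congr 1
      refine Finset.prod_congr rfl fun w hw => ?_
      exact Function.update_of_ne (Finset.ne_of_mem_erase hw) _ _
    have h2 : ∑ e ∈ E.filter (fun e => ¬ v ∈ e), ∏ w ∈ e, Function.update z v t w = A := by
      rw [hA]
      refine Finset.sum_congr rfl fun e he => ?_
      rw [Finset.mem_filter] at he
      refine Finset.prod_congr rfl fun w hw => ?_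
      exact Function.update_of_ne (fun h => he.2 (by rw [← h]; exact hw)) _ _
    rw [h1, h2]; ring
  -- g t ≥ 0 for all t
  set g : ℝ → ℝ := fun t => k * (A + B * t) - μ * (C + t ^ k) with hg
  have hg0 : ∀ t, 0 ≤ g t := by
    intro t
    rcases lt_or_ge 0 (C + t ^ k) with hpos | hle
    · have := hmin (Function.update z v t) (by rw [hN t]; exact hpos)
      rw [hN t, hf t] at this
      simp only [hg]; linarith
    · have htk : 0 ≤ t ^ k := hke.pow_nonneg _
      have hC0 : C = 0 := le_antisymm (by linarith) hCnn
      have ht0 : t = 0 := by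
        have : t ^ k = 0 := le_antisymm (by linarith) htk
        exact pow_eq_zero_iff (Nat.pos_iff_ne_zero.mp hk0) |>.mp this
      have hzw : ∀ w : V, w ≠ v → z w = 0 := by
        intro w hw
        have hmem : w ∈ univ \ ({v} : Finset V) := by simp [hw]
        have hnn : ∀ a ∈ univ \ ({v} : Finset V), 0 ≤ z a ^ k := fun a _ => hke.pow_nonneg _
        have := (Finset.sum_eq_zero_iff_of_nonneg hnn).mp hC0.symm.symm w hmem
        exact pow_eq_zero_iff (Nat.pos_iff_ne_zero.mp hk0) |>.mp this
      have hA0 : A = 0 := by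
        rw [hA]
        refine Finset.sum_eq_zero fun e he => ?_
        rw [Finset.mem_filter] at he
        have hcard : e.card = k := hU e he.1
        have hene : e.Nonempty := Finset.card_pos.mp (by omega)
        obtain ⟨w, hw⟩ := hene
        exact Finset.prod_eq_zero hw (hzw w (fun h => he.2 (h ▸ hw)))
      simp only [hg, ht0, hC0, hA0]
      have : (0:ℝ) ^ k = 0 := zero_pow (Nat.pos_iff_ne_zero.mp hk0)
      rw [this]; ring_nf; simp
  -- g (z v) = 0
  have hgs : g (z v) = 0 := by
    have h1 : A + B * z v = ∑ e ∈ E, ∏ w ∈ e, z w := by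
      have := hf (z v); rw [Function.update_eq_self] at this; exact this.symm
    have h2 : C + (z v) ^ k = ∑ w, z w ^ k := by
      have := hN (z v); rw [Function.update_eq_self] at this; exact this.symm
    simp only [hg]; rw [h1, h2]; linarith [heq]
  -- derivative of g at z v is zero
  have hmin' : IsLocalMin g (z v) := by
    apply IsMinOn.isLocalMin (s := Set.univ)
    · intro t _; rw [hgs]; exact hg0 t
    · exact Filter.univ_mem
  have hderiv : HasDerivAt g ((k : ℝ) * B - μ * (k * z v ^ (k - 1))) (z v) := by
    have h1 : HasDerivAt (fun t : ℝ => (k:ℝ) * (A + B * t)) ((k:ℝ) * B) (z v) := by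
      have : HasDerivAt (fun t : ℝ => A + B * t) B (z v) := by
        simpa using ((hasDerivAt_id (z v)).const_mul B).const_add A
      simpa using this.const_mul (k:ℝ)
    have h2 : HasDerivAt (fun t : ℝ => μ * (C + t ^ k)) (μ * (k * z v ^ (k-1))) (z v) := by
      have : HasDerivAt (fun t : ℝ => C + t ^ k) (k * z v ^ (k-1)) (z v) := by
        simpa using (hasDerivAt_pow k (z v)).const_add C
      simpa using this.const_mul μ
    exact h1.sub h2
  have hzero := hmin'.hasDerivAt_eq_zero hderiv
  have hkne : (k:ℝ) ≠ 0 := Nat.cast_ne_zero.mpr (Nat.pos_iff_ne_zero.mp hk0)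
  have : (k:ℝ) * B = (k:ℝ) * (μ * z v ^ (k-1)) := by ring_nf; ring_nf at hzero; linarith
  exact mul_left_cancel₀ hkne this


lemma exists_min [Fintype V] [DecidableEq V] [Nonempty V] (E : Finset (Finset V)) (k : ℕ)
    (hk0 : 0 < k) (hke : Even k) (hU : ∀ e ∈ E, e.card = k) :
    ∃ z0 : V → ℝ, (∑ v, z0 v ^ k) = 1 ∧
      ∀ w : V → ℝ, 0 < (∑ v, w v ^ k) →
        (∑ e ∈ E, ∏ a ∈ e, z0 a) * (∑ v, w v ^ k) ≤ ∑ e ∈ E, ∏ a ∈ e, w a := by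
  classical
  set N : (V → ℝ) → ℝ := fun z => ∑ v, z v ^ k with hNdef
  set f : (V → ℝ) → ℝ := fun z => ∑ e ∈ E, ∏ a ∈ e, z a with hfdef
  have hNcont : Continuous N := by
    apply continuous_finset_sum
    intro v _
    exact (continuous_apply v).pow k
  have hfcont : Continuous f := by
    apply continuous_finset_sum
    intro e _
    exact continuous_finset_prod e fun a _ => continuous_apply a
  set S : Set (V → ℝ) := {z | N z = 1} with hSdef
  have hSclosed : IsClosed S := isClosed_eq hNcont continuous_const
  have hSbdd : Bornology.IsBounded S := by
    apply Bornology.IsBounded.subset (Metric.isBounded_closedBall (x := (0 : V → ℝ)) (r := 1))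
    intro z hz
    rw [Metric.mem_closedBall]
    rw [dist_pi_le_iff zero_le_one]
    intro v
    rw [Real.dist_eq]; simp only [Pi.zero_apply, sub_zero]
    have h1 : z v ^ k ≤ 1 := by
      have h2 : ∀ w ∈ (univ : Finset V), 0 ≤ z w ^ k := fun w _ => hke.pow_nonneg _
      have := Finset.single_le_sum h2 (mem_univ v)
      have hz1 : N z = 1 := hz
      simp only [hNdef] at hz1
      linarith
    have h2 : |z v| ^ k ≤ 1 := by rwa [hke.pow_abs]
    exact (pow_le_one_iff_of_nonneg (abs_nonneg _) (Nat.pos_iff_ne_zero.mp hk0)).mp h2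
  have hScompact : IsCompact S := Metric.isCompact_of_isClosed_isBounded hSclosed hSbdd
  have hSne : S.Nonempty := by
    obtain ⟨v0⟩ := ‹Nonempty V›
    refine ⟨fun w => if w = v0 then 1 else 0, ?_⟩
    show N _ = 1
    simp only [hNdef]
    rw [Finset.sum_eq_single v0]
    · simp
    · intro w _ hw; simp [hw, zero_pow (Nat.pos_iff_ne_zero.mp hk0)]
    · intro h; exact absurd (mem_univ v0) h
  obtain ⟨z0, hz0S, hz0min⟩ := hScompact.exists_isMinOn hSne hfcont.continuousOn
  refine ⟨z0, hz0S, ?_⟩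
  intro w hw
  -- scale w to the sphere
  set c : ℝ := (∑ v, w v ^ k) ^ (-(1:ℝ)/k) with hc
  have hNw : (0:ℝ) < N w := hw
  have hck : c ^ k = (N w)⁻¹ := by
    rw [hc, ← Real.rpow_natCast ((N w) ^ (-(1:ℝ)/k)) k, ← Real.rpow_mul (le_of_lt hNw)]
    have : (-(1:ℝ)/k) * k = -1 := by
      field_simp
    rw [this, Real.rpow_neg_one]
  have hcw : (fun v => c * w v) ∈ S := by
    show N _ = 1
    simp only [hNdef, mul_pow, ← Finset.mul_sum]
    rw [hck]
    exact inv_mul_cancel₀ (ne_of_gt hNw)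
  have hfcw : f (fun v => c * w v) = c ^ k * f w := by
    simp only [hfdef, Finset.mul_sum]
    refine Finset.sum_congr rfl fun e he => ?_
    rw [Finset.prod_mul_distrib, Finset.prod_const, hU e he]
  have := hz0min hcw
  simp only [Set.mem_setOf_eq] at this
  have hle : f z0 ≤ c ^ k * f w := by rw [← hfcw]; exact this
  rw [hck] at hle
  have := mul_le_mul_of_nonneg_right hle (le_of_lt hNw)
  rwa [inv_mul_eq_div, div_mul_cancel₀ _ (ne_of_gt hNw)] at this

theorem stmt5 [Fintype V] [DecidableEq V]
    (V0 VH : Finset V) (u : V) (E0 EH : Finset (Finset V)) (k : ℕ)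
    (hk : Even k) (hk0 : 0 < k)
    (hI : V0 ∩ VH = {u}) (hcover : V0 ∪ VH = Finset.univ)
    (hE0 : ∀ e ∈ E0, e ⊆ V0) (hEH : ∀ e ∈ EH, e ⊆ VH)
    (hU : Uniform (E0 ∪ EH) k) (hconn : HConnected (E0 ∪ EH))
    (hE0ne : E0.Nonempty) (hEHne : EH.Nonempty)
    (x : V → ℝ) (hx : IsFirstEigvec (E0 ∪ EH) k x) (hxu : x u = 0) :
    (∑ e ∈ E0.filter (fun e => u ∈ e), ∏ w ∈ e.erase u, x w) = 0 ∧
    (∑ e ∈ EH.filter (fun e => u ∈ e), ∏ w ∈ e.erase u, x w) = 0 := by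
  classical
  obtain ⟨hxne, hxeig⟩ := hx
  have : Nonempty V := ⟨u⟩
  set E : Finset (Finset V) := E0 ∪ EH with hE
  set lam : ℝ := lamMin E k with hlam
  have hk2 : 2 ≤ k := by
    obtain ⟨m, hm⟩ := hk; omega
  have hk1 : 1 ≤ k - 1 := by omega
  -- disjointness of edge sets
  have hdisj : Disjoint E0 EH := by
    rw [Finset.disjoint_left]
    intro e he0 heH
    have h1 : e ⊆ V0 ∩ VH := Finset.subset_inter (hE0 e he0) (hEH e heH)
    rw [hI] at h1
    have h2 : e.card ≤ 1 := le_trans (Finset.card_le_card h1) (by simp)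
    have h3 : e.card = k := hU e (Finset.mem_union_left _ he0)
    omega
  set S0 : ℝ := ∑ e ∈ E0.filter (fun e => u ∈ e), ∏ w ∈ e.erase u, x w with hS0
  set SH : ℝ := ∑ e ∈ EH.filter (fun e => u ∈ e), ∏ w ∈ e.erase u, x w with hSH
  -- split of filtered sums over the union, for any function g
  have hsplit : ∀ g : V → ℝ,
      (∑ e ∈ E.filter (fun e => u ∈ e), ∏ w ∈ e.erase u, g w)
      = (∑ e ∈ E0.filter (fun e => u ∈ e), ∏ w ∈ e.erase u, g w)
        + (∑ e ∈ EH.filter (fun e => u ∈ e), ∏ w ∈ e.erase u, g w) := by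
    intro g
    rw [hE, Finset.filter_union, Finset.sum_union (Finset.disjoint_filter_filter hdisj)]
  -- eigen equation at u for x
  have hequ : S0 + SH = 0 := by
    have := hxeig u
    rw [hsplit x] at this
    rw [← hS0, ← hSH] at this
    rw [hxu, zero_pow (by omega : k - 1 ≠ 0), mul_zero] at this
    exact this
  -- positivity of N x
  have hNx : 0 < ∑ v, x v ^ k := by
    obtain ⟨w, hw⟩ := Function.ne_iff.mp hxne
    have h1 : 0 < x w ^ k := hk.pow_pos hw
    have h2 : ∀ v ∈ (univ : Finset V), 0 ≤ x v ^ k := fun v _ => hk.pow_nonneg _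
    calc (0:ℝ) < x w ^ k := h1
      _ ≤ ∑ v, x v ^ k := Finset.single_le_sum h2 (mem_univ w)
  have hray : lam * (∑ v, x v ^ k) = k * ∑ e ∈ E, ∏ w ∈ e, x w :=
    eig_ray E k hk0 hU lam x hxeig
  -- minimizer
  obtain ⟨z0, hz0N, hz0min⟩ := exists_min E k hk0 hk hU
  set μ : ℝ := (k : ℝ) * ∑ e ∈ E, ∏ a ∈ e, z0 a with hμ
  have hμmin : ∀ w : V → ℝ, 0 < (∑ v, w v ^ k) →
      μ * (∑ v, w v ^ k) ≤ k * ∑ e ∈ E, ∏ a ∈ e, w a := by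
    intro w hw
    have := hz0min w hw
    have hkc : (0:ℝ) ≤ (k:ℝ) := Nat.cast_nonneg k
    calc μ * (∑ v, w v ^ k) = k * ((∑ e ∈ E, ∏ a ∈ e, z0 a) * (∑ v, w v ^ k)) := by ring
      _ ≤ k * ∑ e ∈ E, ∏ a ∈ e, w a := by
          exact mul_le_mul_of_nonneg_left this hkc
  have hz0eq : μ * (∑ v, z0 v ^ k) = k * ∑ e ∈ E, ∏ w ∈ e, z0 w := by
    rw [hz0N, mul_one, hμ]
  have hz0eig := lagrange E k hk0 hk hU μ z0 hz0eq hμmin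
  have hz0ne : z0 ≠ 0 := by
    intro h
    rw [h] at hz0N
    simp [zero_pow (by omega : k ≠ 0)] at hz0N
  have hμspec : μ ∈ specH E k := ⟨z0, hz0ne, hz0eig⟩
  have hbdd : BddBelow (specH E k) := by
    refine ⟨-(E.card : ℝ), ?_⟩
    rintro ν ⟨z, hzne, hzeig⟩
    exact spec_bdd E k hk0 hU ν z hzne hzeig
  have hlamμ : lam ≤ μ := csInf_le hbdd hμspec
  have hμlam : μ ≤ lam := by
    have h1 := hμmin x hNx
    rw [← hray] at h1
    exact le_of_mul_le_mul_right h1 hNx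
  have hμeq : μ = lam := le_antisymm hμlam hlamμ
  -- the flipped vector y
  set y : V → ℝ := fun v => if v ∈ VH ∧ v ≠ u then -x v else x v with hy
  have hyu : y u = x u := by simp [hy]
  have hyV0 : ∀ v ∈ V0, y v = x v := by
    intro v hv
    simp only [hy]
    split_ifs with h
    · exfalso
      have : v ∈ V0 ∩ VH := Finset.mem_inter.mpr ⟨hv, h.1⟩
      rw [hI] at this
      exact h.2 (Finset.mem_singleton.mp this)
    · rfl
  have hyVH : ∀ v ∈ VH, v ≠ u → y v = -x v := by
    intro v hv hvu
    simp [hy, hv, hvu]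
  have hNy : (∑ v, y v ^ k) = ∑ v, x v ^ k := by
    refine Finset.sum_congr rfl fun v _ => ?_
    simp only [hy]
    split_ifs with h
    · exact hk.neg_pow (x v)
    · rfl
  have hfy : (∑ e ∈ E, ∏ w ∈ e, y w) = ∑ e ∈ E, ∏ w ∈ e, x w := by
    rw [hE, Finset.sum_union hdisj, Finset.sum_union hdisj]
    congr 1
    · refine Finset.sum_congr rfl fun e he => ?_
      exact Finset.prod_congr rfl fun w hw => hyV0 w (hE0 e he hw)
    · refine Finset.sum_congr rfl fun e he => ?_
      by_cases hu : u ∈ e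
      · rw [Finset.prod_eq_zero hu (by rw [hyu, hxu]), Finset.prod_eq_zero hu hxu]
      · have hneg : ∀ w ∈ e, y w = -x w := fun w hw =>
          hyVH w (hEH e he hw) (fun h => hu (h ▸ hw))
        rw [Finset.prod_congr rfl hneg]
        have : ∏ w ∈ e, -x w = (-1 : ℝ) ^ e.card * ∏ w ∈ e, x w := by
          rw [← Finset.prod_const, ← Finset.prod_mul_distrib]
          exact Finset.prod_congr rfl fun w _ => by ring
        rw [this, hU e (Finset.mem_union_right _ he), hk.neg_one_pow, one_mul]
  -- y is an eigenvector for μ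
  have hyeq : μ * (∑ v, y v ^ k) = k * ∑ e ∈ E, ∏ w ∈ e, y w := by
    rw [hNy, hfy, hμeq, hray]
  have hyeig := lagrange E k hk0 hk hU μ y hyeq hμmin
  -- eigen equation at u for y
  have hequy : S0 - SH = 0 := by
    have := hyeig u
    rw [hsplit y] at this
    rw [hyu, hxu, zero_pow (by omega : k - 1 ≠ 0), mul_zero] at this
    have h1 : (∑ e ∈ E0.filter (fun e => u ∈ e), ∏ w ∈ e.erase u, y w) = S0 := by
      rw [hS0]
      refine Finset.sum_congr rfl fun e he => ?_
      rw [Finset.mem_filter] at he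
      exact Finset.prod_congr rfl fun w hw =>
        hyV0 w (hE0 e he.1 (Finset.mem_of_mem_erase hw))
    have h2 : (∑ e ∈ EH.filter (fun e => u ∈ e), ∏ w ∈ e.erase u, y w) = -SH := by
      rw [hSH, ← Finset.sum_neg_distrib]
      refine Finset.sum_congr rfl fun e he => ?_
      rw [Finset.mem_filter] at he
      have hneg : ∀ w ∈ e.erase u, y w = -x w := fun w hw =>
        hyVH w (hEH e he.1 (Finset.mem_of_mem_erase hw)) (Finset.ne_of_mem_erase hw)
      rw [Finset.prod_congr rfl hneg]
      have : ∏ w ∈ e.erase u, -x w = (-1:ℝ) ^ (e.erase u).card * ∏ w ∈ e.erase u, x w := by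
        rw [← Finset.prod_const, ← Finset.prod_mul_distrib]
        exact Finset.prod_congr rfl fun w _ => by ring
      rw [this, Finset.card_erase_of_mem he.2,
        hU e (Finset.mem_union_right _ he.1)]
      have hodd : Odd (k - 1) := Nat.Even.sub_odd (by omega) hk odd_one
      rw [hodd.neg_one_pow]
      ring
    rw [h1, h2] at this
    linarith
  constructor
  · linarith
  · linarith
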